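/- For all integers r ≥ 1 and ℓ ≥ 1, the following binomial identity holds: ∑_{j=0}^{ℓ−1} ∑_{i=0}^{r−1} C(r+ℓ−1−i, r+j−i) = (∑_{i=r}^{r+ℓ} C(r+ℓ, i)) − 2^ℓ. -/
import Mathlib

/-- Hockey stick, additive form. -/
lemma hockey (l c : ℕ) : ∀ r : ℕ,
    (∑ i ∈ Finset.range r, (l + i).choose c) + l.choose (c + 1)
      = (l + r).choose (c + 1) := by
  intro r
  induction r with
  | zero => simp
  | succ n ih =>
    rw [Finset.sum_range_succ, add_right_comm, ih,
      show l + (n + 1) = (l + n) + 1 by ring, Nat.choose_succ_succ]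
    ring

lemma inner_key (r l j : ℕ) (hj : j < l) :
    (∑ i ∈ Finset.range r, (r + l - 1 - i).choose (r + j - i)) + l.choose (l - j)
      = (r + l).choose (l - j) := by
  have h1 : ∑ i ∈ Finset.range r, (r + l - 1 - i).choose (r + j - i)
      = ∑ i ∈ Finset.range r, (r + l - 1 - i).choose (l - 1 - j) := by
    apply Finset.sum_congr rfl
    intro i hi
    simp only [Finset.mem_range] at hi
    have h2 : r + j - i ≤ r + l - 1 - i := by omega
    have h3 : (r + l - 1 - i) - (r + j - i) = l - 1 - j := by omega
    rw [← Nat.choose_symm h2, h3]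
  rw [h1, ← Finset.sum_range_reflect]
  have h4 : ∀ i ∈ Finset.range r,
      (r + l - 1 - (r - 1 - i)).choose (l - 1 - j) = (l + i).choose (l - 1 - j) := by
    intro i hi
    simp only [Finset.mem_range] at hi
    congr 1
    omega
  rw [Finset.sum_congr rfl h4]
  have h5 : l - j = (l - 1 - j) + 1 := by omega
  rw [h5, add_comm r l]
  exact hockey l (l - 1 - j) r

/-- For all integers `r ≥ 1` and `ℓ ≥ 1`,
`∑_{j=0}^{ℓ−1} ∑_{i=0}^{r−1} C(r+ℓ−1−i, r+j−i) = (∑_{i=r}^{r+ℓ} C(r+ℓ, i)) − 2^ℓ`. -/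
theorem stmt_12 (r l : ℕ) (hr : 1 ≤ r) (hl : 1 ≤ l) :
    ((∑ j ∈ Finset.range l, ∑ i ∈ Finset.range r, (r + l - 1 - i).choose (r + j - i) : ℕ) : ℤ)
      = ((∑ i ∈ Finset.Icc r (r + l), (r + l).choose i : ℕ) : ℤ) - 2 ^ l := by
  have key : (∑ j ∈ Finset.range l, ∑ i ∈ Finset.range r, (r + l - 1 - i).choose (r + j - i))
      + 2 ^ l = ∑ i ∈ Finset.Icc r (r + l), (r + l).choose i := by
    -- A + ∑ C(l, l-j) = ∑ C(r+l, l-j) = B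
    have hAB : (∑ j ∈ Finset.range l, ∑ i ∈ Finset.range r, (r + l - 1 - i).choose (r + j - i))
        + ∑ j ∈ Finset.range l, l.choose (l - j)
        = ∑ j ∈ Finset.range l, (r + l).choose (l - j) := by
      rw [← Finset.sum_add_distrib]
      exact Finset.sum_congr rfl fun j hj => inner_key r l j (Finset.mem_range.mp hj)
    -- ∑_{j<l} C(l, l-j) + 1 = 2^l
    have hC : (∑ j ∈ Finset.range l, l.choose (l - j)) + 1 = 2 ^ l := by
      have := Nat.sum_range_choose l
      rw [Finset.sum_range_succ] at this
      rw [← this, Nat.choose_self]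
      congr 1
      exact Finset.sum_congr rfl fun j hj =>
        Nat.choose_symm (le_of_lt (Finset.mem_range.mp hj))
    -- T = B + 1
    have hT : ∑ i ∈ Finset.Icc r (r + l), (r + l).choose i
        = (∑ j ∈ Finset.range l, (r + l).choose (l - j)) + 1 := by
      have hmap : ∑ i ∈ Finset.Icc r (r + l), (r + l).choose i
          = ∑ s ∈ Finset.range (l + 1), (r + l).choose (r + s) := by
        rw [← Finset.Ico_add_one_right_eq_Icc, Finset.sum_Ico_eq_sum_range,
          show r + l + 1 - r = l + 1 by omega]
      have hsym : ∀ s ∈ Finset.range (l + 1),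
          (r + l).choose (r + s) = (r + l).choose (l - s) := by
        intro s hs
        simp only [Finset.mem_range] at hs
        have h2 : r + s ≤ r + l := by omega
        rw [← Nat.choose_symm h2]
        congr 1
        omega
      rw [hmap, Finset.sum_congr rfl hsym, Finset.sum_range_succ]
      simp
    omega
  rw [← key]
  push_cast
  ring
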